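/- Let q be any prime power and F = GF(q). Let W be the 4-dimensional subspace of quadratic forms over F spanned by X0X2, X1^2, X1X2 and X2^2 (the web of conics associated with the line-orbit o_6). Then among the conics of W there are exactly q+1 double lines, exactly (3q^2+q)/2 pairs of real lines, exactly (q^2−q)/2 pairs of imaginary lines, and exactly q^3−q^2 nonsingular conics. -/

import Mathlib

open Matrix

namespace Conics

/-- Coefficient vector (a0,...,a5) of the product of two linear forms
`(b0*X0+b1*X1+b2*X2)*(c0*X0+c1*X1+c2*X2)`, where the quadratic form with
coefficient vector `a` is `a0*X0^2 + a1*X0*X1 + a2*X0*X2 + a3*X1^2 + a4*X1*X2 + a5*X2^2`. -/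
def mulLin {F : Type} [Field F] (b c : Fin 3 → F) : Fin 6 → F :=
  ![b 0 * c 0, b 0 * c 1 + b 1 * c 0, b 0 * c 2 + b 2 * c 0,
    b 1 * c 1, b 1 * c 2 + b 2 * c 1, b 2 * c 2]

/-- The discriminant of the quadratic form with coefficient vector `a`. -/
def disc {F : Type} [Field F] (a : Fin 6 → F) : F :=
  4 * a 0 * a 3 * a 5 + a 1 * a 2 * a 4 - a 0 * a 4 ^ 2 - a 3 * a 2 ^ 2 - a 5 * a 1 ^ 2

/-- `f_a` is a double line: `f_a = c * l^2` for a nonzero scalar `c` and nonzero linear form `l`. -/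
def IsDoubleLine {F : Type} [Field F] (a : Fin 6 → F) : Prop :=
  ∃ (c : F) (l : Fin 3 → F), c ≠ 0 ∧ l ≠ 0 ∧ a = c • mulLin l l

/-- `f_a` is a pair of (distinct) real lines: `f_a = l1 * l2` with neither linear form a scalar
multiple of the other. -/
def IsRealPair {F : Type} [Field F] (a : Fin 6 → F) : Prop :=
  ∃ l1 l2 : Fin 3 → F, (¬ ∃ t : F, l2 = t • l1) ∧ (¬ ∃ t : F, l1 = t • l2) ∧ a = mulLin l1 l2

/-- `f_a` is a pair of conjugate imaginary lines: singular, but not a product of two linear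
forms over `F`. -/
def IsImagPair {F : Type} [Field F] (a : Fin 6 → F) : Prop :=
  disc a = 0 ∧ ¬ ∃ l1 l2 : Fin 3 → F, a = mulLin l1 l2

/-- `f_a` is a nonsingular conic. -/
def IsNonsingular {F : Type} [Field F] (a : Fin 6 → F) : Prop :=
  disc a ≠ 0

/-- The number of conics of a given type `T` in a linear system `W` (a subspace of the space of
quadratic forms, identified with `F^6`): the number of 1-dimensional subspaces `⟨a⟩` of `W`,
`a ≠ 0`, such that `f_a` has type `T`. -/
noncomputable def numConics {F : Type} [Field F] (W : Submodule F (Fin 6 → F))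
    (T : (Fin 6 → F) → Prop) : ℕ :=
  Set.ncard {P : Submodule F (Fin 6 → F) |
    ∃ a : Fin 6 → F, a ≠ 0 ∧ a ∈ W ∧ T a ∧ P = Submodule.span F {a}}

/-- The symmetric 3×3 matrix associated with a point `y` of `PG(5,q)`. -/
def M {F : Type} [Field F] (y : Fin 6 → F) : Matrix (Fin 3) (Fin 3) F :=
  !![y 0, y 1, y 2; y 1, y 3, y 4; y 2, y 4, y 5]

/-- The pairing `B(a,y) = a0*y0 + ... + a5*y5`. -/
def Bform {F : Type} [Field F] (a y : Fin 6 → F) : F :=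
  a 0 * y 0 + a 1 * y 1 + a 2 * y 2 + a 3 * y 3 + a 4 * y 4 + a 5 * y 5

/-- The squab of conics associated with a (nonzero) point `y`: the hyperplane
`{a : B(a,y) = 0}` of the space of quadratic forms. -/
def squab {F : Type} [Field F] (y : Fin 6 → F) : Submodule F (Fin 6 → F) where
  carrier := {a | Bform a y = 0}
  add_mem' := by
    intro a b ha hb
    simp only [Set.mem_setOf_eq, Bform, Pi.add_apply] at *
    linear_combination ha + hb
  zero_mem' := by simp [Bform]
  smul_mem' := by
    intro c a ha
    simp only [Set.mem_setOf_eq, Bform, Pi.smul_apply, smul_eq_mul] at *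
    linear_combination c * ha

variable {F : Type} [Field F]

@[simp] lemma vec6_0 {α : Type*} (a b c d e f : α) : ![a,b,c,d,e,f] (0 : Fin 6) = a := rfl
@[simp] lemma vec6_1 {α : Type*} (a b c d e f : α) : ![a,b,c,d,e,f] (1 : Fin 6) = b := rfl
@[simp] lemma vec6_2 {α : Type*} (a b c d e f : α) : ![a,b,c,d,e,f] (2 : Fin 6) = c := rfl
@[simp] lemma vec6_3 {α : Type*} (a b c d e f : α) : ![a,b,c,d,e,f] (3 : Fin 6) = d := rfl
@[simp] lemma vec6_4 {α : Type*} (a b c d e f : α) : ![a,b,c,d,e,f] (4 : Fin 6) = e := rfl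
@[simp] lemma vec6_5 {α : Type*} (a b c d e f : α) : ![a,b,c,d,e,f] (5 : Fin 6) = f := rfl
@[simp] lemma vec3_0 {α : Type*} (a b c : α) : ![a,b,c] (0 : Fin 3) = a := rfl
@[simp] lemma vec3_1 {α : Type*} (a b c : α) : ![a,b,c] (1 : Fin 3) = b := rfl
@[simp] lemma vec3_2 {α : Type*} (a b c : α) : ![a,b,c] (2 : Fin 3) = c := rfl

lemma mulLin_smul_left (t : F) (b c : Fin 3 → F) : mulLin (t • b) c = t • mulLin b c := by
  funext i; fin_cases i <;> simp [mulLin, vec6_0, vec6_1, vec6_2, vec6_3, vec6_4, vec6_5] <;> ring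

lemma disc_smul (c : F) (a : Fin 6 → F) : disc (c • a) = c ^ 3 * disc a := by
  simp only [disc, Pi.smul_apply, smul_eq_mul]; ring

lemma exists_sq [Fintype F] (h2 : (2:F) = 0) (z : F) : ∃ b : F, b ^ 2 = z := by
  have hinj : Function.Injective fun x : F => x ^ 2 := by
    intro x y h
    simp only at h
    have h3 : (x - y) ^ 2 = 0 := by linear_combination h + (y ^ 2 - x * y) * h2
    have := pow_eq_zero_iff (n := 2) (by norm_num) |>.mp h3
    exact sub_eq_zero.mp this
  exact (Finite.injective_iff_surjective.mp hinj) z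

lemma ns_iff {a : Fin 6 → F} (h0 : a 0 = 0) (h1 : a 1 = 0) :
    IsNonsingular a ↔ (a 2 ≠ 0 ∧ a 3 ≠ 0) := by
  have hd : disc a = -(a 3 * a 2 ^ 2) := by simp only [disc, h0, h1]; ring
  rw [IsNonsingular, hd]
  simp [mul_eq_zero, pow_eq_zero_iff]
  tauto

lemma dl_iff [Fintype F] {a : Fin 6 → F} (h0 : a 0 = 0) (h1 : a 1 = 0) :
    IsDoubleLine a ↔ (a 2 = 0 ∧ a 4 ^ 2 = 4 * a 3 * a 5 ∧ ¬ (a 3 = 0 ∧ a 4 = 0 ∧ a 5 = 0)) := by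
  constructor
  · rintro ⟨c, l, hc, hl, ha⟩
    have e0 := congrFun ha 0
    have e2 := congrFun ha 2
    have e3 := congrFun ha 3
    have e4 := congrFun ha 4
    have e5 := congrFun ha 5
    simp only [mulLin, Pi.smul_apply, smul_eq_mul, Matrix.cons_val_zero, Matrix.cons_val_one,
      Matrix.head_cons, vec6_0, vec6_1, vec6_2, vec6_3, vec6_4, vec6_5] at e0 e2 e3 e4 e5
    rw [h0] at e0
    have hl0 : l 0 = 0 := by
      rcases mul_eq_zero.mp e0.symm with h | h
      · exact absurd h hc
      · exact mul_self_eq_zero.mp h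
    refine ⟨by rw [e2, hl0]; ring, by rw [e3, e4, e5]; ring, ?_⟩
    rintro ⟨h3, h4, h5⟩
    apply hl
    have hl1 : l 1 = 0 := by
      rw [h3] at e3
      rcases mul_eq_zero.mp e3.symm with h | h
      · exact absurd h hc
      · exact mul_self_eq_zero.mp h
    have hl2 : l 2 = 0 := by
      rw [h5] at e5
      rcases mul_eq_zero.mp e5.symm with h | h
      · exact absurd h hc
      · exact mul_self_eq_zero.mp h
    funext i; fin_cases i <;> simp [hl0, hl1, hl2]
  · rintro ⟨h2, h45, hne⟩
    by_cases hchar : (2:F) = 0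
    · have h40 : (4:F) = 0 := by linear_combination (2:F) * hchar
      have h4 : a 4 = 0 := by
        have : a 4 ^ 2 = 0 := by rw [h45, h40]; ring
        exact pow_eq_zero_iff (n := 2) (by norm_num) |>.mp this
      obtain ⟨b, hb⟩ := exists_sq hchar (a 3)
      obtain ⟨d, hd⟩ := exists_sq hchar (a 5)
      refine ⟨1, ![0, b, d], one_ne_zero, ?_, ?_⟩
      · intro h
        apply hne
        have hb0 : b = 0 := by simpa using congrFun h 1
        have hd0 : d = 0 := by simpa using congrFun h 2
        refine ⟨by rw [← hb, hb0]; ring, h4, by rw [← hd, hd0]; ring⟩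
      · funext i
        fin_cases i <;> simp [mulLin, vec6_0, vec6_1, vec6_2, vec6_3, vec6_4, vec6_5, h0, h1, h2]
        · rw [← hb]; ring
        · rw [h4]; linear_combination -(b * d) * hchar
        · rw [← hd]; ring
    · by_cases h3 : a 3 = 0
      · have h4 : a 4 = 0 := by
          have : a 4 ^ 2 = 0 := by rw [h45, h3]; ring
          exact pow_eq_zero_iff (n := 2) (by norm_num) |>.mp this
        have h5 : a 5 ≠ 0 := by
          intro h5
          exact hne ⟨h3, h4, h5⟩
        refine ⟨a 5, ![0, 0, 1], h5, ?_, ?_⟩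
        · intro h; simpa using congrFun h 2
        · funext i; fin_cases i <;> simp [mulLin, vec6_0, vec6_1, vec6_2, vec6_3, vec6_4, vec6_5, h0, h1, h2, h3, h4]
      · refine ⟨a 3, ![0, 1, a 4 / (2 * a 3)], h3, ?_, ?_⟩
        · intro h; simpa using congrFun h 1
        · funext i
          fin_cases i <;> simp [mulLin, vec6_0, vec6_1, vec6_2, vec6_3, vec6_4, vec6_5, h0, h1, h2]
          · field_simp; ring
          · field_simp
            linear_combination (-1 : F) * h45


lemma real_iff {a : Fin 6 → F} (h0 : a 0 = 0) (h1 : a 1 = 0) :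
    IsRealPair a ↔ ((a 2 ≠ 0 ∧ a 3 = 0) ∨ (a 2 = 0 ∧ a 3 = 0 ∧ a 4 ≠ 0) ∨
      (a 2 = 0 ∧ a 3 ≠ 0 ∧ ∃ r t : F, r ≠ t ∧ a 4 = a 3 * (r + t) ∧ a 5 = a 3 * (r * t))) := by
  constructor
  · rintro ⟨b, c, hn1, hn2, ha⟩
    have e0 := congrFun ha 0
    have e1 := congrFun ha 1
    have e2 := congrFun ha 2
    have e3 := congrFun ha 3
    have e4 := congrFun ha 4
    have e5 := congrFun ha 5
    simp only [mulLin, vec6_0, vec6_1, vec6_2, vec6_3, vec6_4, vec6_5] at e0 e1 e2 e3 e4 e5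
    rw [h0] at e0; rw [h1] at e1
    by_cases hb0 : b 0 = 0
    · by_cases hc0 : c 0 = 0
      · have ha2 : a 2 = 0 := by rw [e2, hb0, hc0]; ring
        by_cases hb1 : b 1 = 0
        · have hb2 : b 2 ≠ 0 := by
            intro h
            exact hn2 ⟨0, by funext i; fin_cases i <;> simp [hb0, hb1, h]⟩
          have hc1 : c 1 ≠ 0 := by
            intro h
            apply hn1
            refine ⟨c 2 / b 2, ?_⟩
            funext i; fin_cases i <;> simp [hc0, h, hb0, hb1] <;> field_simp
          have h4 : a 4 = b 2 * c 1 := by rw [e4, hb1]; ring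
          exact Or.inr (Or.inl ⟨ha2, by rw [e3, hb1]; ring, by rw [h4]; exact mul_ne_zero hb2 hc1⟩)
        · by_cases hc1 : c 1 = 0
          · have hc2 : c 2 ≠ 0 := by
              intro h
              exact hn1 ⟨0, by funext i; fin_cases i <;> simp [hc0, hc1, h]⟩
            have h4 : a 4 = b 1 * c 2 := by rw [e4, hc1]; ring
            exact Or.inr (Or.inl ⟨ha2, by rw [e3, hc1]; ring, by rw [h4]; exact mul_ne_zero hb1 hc2⟩)
          · refine Or.inr (Or.inr ⟨ha2, by rw [e3]; exact mul_ne_zero hb1 hc1,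
              b 2 / b 1, c 2 / c 1, ?_, ?_, ?_⟩)
            · intro h
              have hcross : b 2 * c 1 = c 2 * b 1 := (div_eq_div_iff hb1 hc1).mp h
              apply hn1
              refine ⟨c 1 / b 1, ?_⟩
              funext i
              fin_cases i
              · simp [hb0, hc0]
              · simp; field_simp
              · simp
                field_simp
                linear_combination -hcross
            · rw [e3, e4]; first | (field_simp; ring) | field_simp
            · rw [e3, e5]; first | (field_simp; ring) | field_simp
      · have hb1 : b 1 = 0 := by
          rw [hb0] at e1
          have h' : b 1 * c 0 = 0 := by linear_combination -e1
          rcases mul_eq_zero.mp h' with h | h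
          · exact h
          · exact absurd h hc0
        have hb2 : b 2 ≠ 0 := by
          intro h
          exact hn2 ⟨0, by funext i; fin_cases i <;> simp [hb0, hb1, h]⟩
        refine Or.inl ⟨?_, by rw [e3, hb1]; ring⟩
        have h2' : a 2 = b 2 * c 0 := by rw [e2, hb0]; ring
        rw [h2']; exact mul_ne_zero hb2 hc0
    · have hc0 : c 0 = 0 := by
        rcases mul_eq_zero.mp e0.symm with h | h
        · exact absurd h hb0
        · exact h
      have hc1 : c 1 = 0 := by
        rw [hc0] at e1
        have h' : b 0 * c 1 = 0 := by linear_combination -e1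
        rcases mul_eq_zero.mp h' with h | h
        · exact absurd h hb0
        · exact h
      have hc2 : c 2 ≠ 0 := by
        intro h
        exact hn1 ⟨0, by funext i; fin_cases i <;> simp [hc0, hc1, h]⟩
      refine Or.inl ⟨?_, by rw [e3, hc1]; ring⟩
      have h2' : a 2 = b 0 * c 2 := by rw [e2, hc0]; ring
      rw [h2']; exact mul_ne_zero hb0 hc2
  · rintro (⟨h2, h3⟩ | ⟨h2, h3, h4⟩ | ⟨h2, h3, r, t, hrt, h4, h5⟩)
    · refine ⟨![0,0,1], ![a 2, a 4, a 5], ?_, ?_, ?_⟩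
      · rintro ⟨u, h⟩
        have hA := congrFun h 0
        simp at hA
        exact h2 hA
      · rintro ⟨u, h⟩
        have hA := congrFun h 0
        have hB := congrFun h 2
        simp at hA hB
        rcases hA with h' | h'
        · rw [h'] at hB; simp at hB
        · exact h2 h'
      · funext i; fin_cases i <;> simp [mulLin, h0, h1, h3]
    · refine ⟨![0,0,1], ![0, a 4, a 5], ?_, ?_, ?_⟩
      · rintro ⟨u, h⟩
        have hA := congrFun h 1
        simp at hA
        exact h4 hA
      · rintro ⟨u, h⟩
        have hA := congrFun h 1
        have hB := congrFun h 2
        simp at hA hB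
        rcases hA with h' | h'
        · rw [h'] at hB; simp at hB
        · exact h4 h'
      · funext i; fin_cases i <;> simp [mulLin, h0, h1, h2, h3]
    · refine ⟨![0, a 3, a 3 * r], ![0, 1, t], ?_, ?_, ?_⟩
      · rintro ⟨u, h⟩
        have hA := congrFun h 1
        have hB := congrFun h 2
        simp at hA hB
        apply hrt
        have : t = r := by linear_combination hB - r * hA
        exact this.symm
      · rintro ⟨u, h⟩
        have hA := congrFun h 1
        have hB := congrFun h 2
        simp at hA hB
        apply hrt
        have : a 3 * r = a 3 * t := by linear_combination hB - t * hA
        exact mul_left_cancel₀ h3 this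
      · funext i
        fin_cases i
        · simp [mulLin, h0]
        · simp [mulLin, h1]
        · simp [mulLin, h2]
        · simp [mulLin]
        · simp [mulLin]; rw [h4]; ring
        · simp [mulLin]; rw [h5]; ring

lemma im_iff {a : Fin 6 → F} (h0 : a 0 = 0) (h1 : a 1 = 0) :
    IsImagPair a ↔ (a 2 = 0 ∧ a 3 ≠ 0 ∧
      ¬ ∃ r t : F, a 4 = a 3 * (r + t) ∧ a 5 = a 3 * (r * t)) := by
  constructor
  · rintro ⟨hd, hnf⟩
    have hd' : a 3 * a 2 ^ 2 = 0 := by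
      have h : disc a = -(a 3 * a 2 ^ 2) := by simp only [disc, h0, h1]; ring
      rw [h] at hd
      exact neg_eq_zero.mp hd
    have key2 : a 2 = 0 := by
      by_contra h2
      have h3 : a 3 = 0 := by
        rcases mul_eq_zero.mp hd' with h | h
        · exact h
        · exact absurd (pow_eq_zero_iff (n := 2) (by norm_num) |>.mp h) h2
      exact hnf ⟨![0,0,1], ![a 2, a 4, a 5],
        by funext i; fin_cases i <;> simp [mulLin, h0, h1, h3]⟩
    have h3 : a 3 ≠ 0 := by
      intro h3
      exact hnf ⟨![0,0,1], ![0, a 4, a 5],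
        by funext i; fin_cases i <;> simp [mulLin, h0, h1, h3, key2]⟩
    refine ⟨key2, h3, ?_⟩
    rintro ⟨r, t, h4, h5⟩
    apply hnf
    refine ⟨![0, a 3, a 3 * r], ![0, 1, t], ?_⟩
    funext i
    fin_cases i
    · simp [mulLin, h0]
    · simp [mulLin, h1]
    · simp [mulLin, key2]
    · simp [mulLin]
    · simp [mulLin]; rw [h4]; ring
    · simp [mulLin]; rw [h5]; ring
  · rintro ⟨h2, h3, hne⟩
    constructor
    · simp only [disc, h0, h1, h2]; ring
    · rintro ⟨b, c, ha⟩
      have e0 := congrFun ha 0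
      have e1 := congrFun ha 1
      have e3 := congrFun ha 3
      have e4 := congrFun ha 4
      have e5 := congrFun ha 5
      simp only [mulLin, vec6_0, vec6_1, vec6_3, vec6_4, vec6_5] at e0 e1 e3 e4 e5
      rw [h0] at e0; rw [h1] at e1
      by_cases hb0 : b 0 = 0
      · by_cases hc0 : c 0 = 0
        · have hb1 : b 1 ≠ 0 := by
            intro h
            exact h3 (by rw [e3, h]; ring)
          have hc1 : c 1 ≠ 0 := by
            intro h
            exact h3 (by rw [e3, h]; ring)
          apply hne
          refine ⟨b 2 / b 1, c 2 / c 1, ?_, ?_⟩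
          · rw [e3, e4]; first | (field_simp; ring) | field_simp
          · rw [e3, e5]; first | (field_simp; ring) | field_simp
        · have hb1 : b 1 = 0 := by
            rw [hb0] at e1
            have h' : b 1 * c 0 = 0 := by linear_combination -e1
            rcases mul_eq_zero.mp h' with h | h
            · exact h
            · exact absurd h hc0
          exact h3 (by rw [e3, hb1]; ring)
      · have hc0 : c 0 = 0 := by
          rcases mul_eq_zero.mp e0.symm with h | h
          · exact absurd h hb0
          · exact h
        have hc1 : c 1 = 0 := by
          rw [hc0] at e1
          have h' : b 0 * c 1 = 0 := by linear_combination -e1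
          rcases mul_eq_zero.mp h' with h | h
          · exact absurd h hb0
          · exact h
        exact h3 (by rw [e3, hc1]; ring)

lemma dl_smul {c : F} (hc : c ≠ 0) {a : Fin 6 → F} (h : IsDoubleLine a) :
    IsDoubleLine (c • a) := by
  obtain ⟨d, l, hd, hl, rfl⟩ := h
  exact ⟨c * d, l, mul_ne_zero hc hd, hl, by rw [smul_smul]⟩

lemma rp_smul {c : F} (hc : c ≠ 0) {a : Fin 6 → F} (h : IsRealPair a) :
    IsRealPair (c • a) := by
  obtain ⟨b, d, hn1, hn2, rfl⟩ := h
  refine ⟨c • b, d, ?_, ?_, (mulLin_smul_left c b d).symm⟩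
  · rintro ⟨u, h⟩
    exact hn1 ⟨u * c, by rw [h, smul_smul]⟩
  · rintro ⟨u, h⟩
    exact hn2 ⟨c⁻¹ * u, by rw [mul_smul, ← h, inv_smul_smul₀ hc]⟩

lemma ns_smul {c : F} (hc : c ≠ 0) {a : Fin 6 → F} (h : IsNonsingular a) :
    IsNonsingular (c • a) := by
  rw [IsNonsingular, disc_smul]
  exact mul_ne_zero (pow_ne_zero _ hc) h

lemma ip_smul {c : F} (hc : c ≠ 0) {a : Fin 6 → F} (h : IsImagPair a) :
    IsImagPair (c • a) := by
  obtain ⟨hd, hnf⟩ := h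
  refine ⟨by rw [disc_smul, hd, mul_zero], ?_⟩
  rintro ⟨l1, l2, h⟩
  exact hnf ⟨c⁻¹ • l1, l2, by rw [mulLin_smul_left, ← h, inv_smul_smul₀ hc]⟩

lemma memW (a : Fin 6 → F) :
    a ∈ Submodule.span F ({![0, 0, 1, 0, 0, 0], ![0, 0, 0, 1, 0, 0],
      ![0, 0, 0, 0, 1, 0], ![0, 0, 0, 0, 0, 1]} : Set (Fin 6 → F)) ↔ a 0 = 0 ∧ a 1 = 0 := by
  constructor
  · intro h
    induction h using Submodule.span_induction with
    | mem x hx =>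
      simp only [Set.mem_insert_iff, Set.mem_singleton_iff] at hx
      rcases hx with rfl | rfl | rfl | rfl <;> exact ⟨rfl, rfl⟩
    | zero => exact ⟨rfl, rfl⟩
    | add x y _ _ hx hy => exact ⟨by simp [hx.1, hy.1], by simp [hx.2, hy.2]⟩
    | smul c x _ hx => exact ⟨by simp [hx.1], by simp [hx.2]⟩
  · rintro ⟨h0, h1⟩
    have hrep : a = a 2 • ![0, 0, 1, 0, 0, 0] + a 3 • ![0, 0, 0, 1, 0, 0]
        + a 4 • ![0, 0, 0, 0, 1, 0] + a 5 • ![0, 0, 0, 0, 0, 1] := by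
      funext i; fin_cases i <;> simp [h0, h1]
    rw [hrep]
    have m1 : (![0, 0, 1, 0, 0, 0] : Fin 6 → F) ∈ ({![0, 0, 1, 0, 0, 0], ![0, 0, 0, 1, 0, 0],
        ![0, 0, 0, 0, 1, 0], ![0, 0, 0, 0, 0, 1]} : Set (Fin 6 → F)) := by simp
    have m2 : (![0, 0, 0, 1, 0, 0] : Fin 6 → F) ∈ ({![0, 0, 1, 0, 0, 0], ![0, 0, 0, 1, 0, 0],
        ![0, 0, 0, 0, 1, 0], ![0, 0, 0, 0, 0, 1]} : Set (Fin 6 → F)) := by simp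
    have m3 : (![0, 0, 0, 0, 1, 0] : Fin 6 → F) ∈ ({![0, 0, 1, 0, 0, 0], ![0, 0, 0, 1, 0, 0],
        ![0, 0, 0, 0, 1, 0], ![0, 0, 0, 0, 0, 1]} : Set (Fin 6 → F)) := by simp
    have m4 : (![0, 0, 0, 0, 0, 1] : Fin 6 → F) ∈ ({![0, 0, 1, 0, 0, 0], ![0, 0, 0, 1, 0, 0],
        ![0, 0, 0, 0, 1, 0], ![0, 0, 0, 0, 0, 1]} : Set (Fin 6 → F)) := by simp
    exact Submodule.add_mem _ (Submodule.add_mem _ (Submodule.add_mem _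
      (Submodule.smul_mem _ _ (Submodule.subset_span m1))
      (Submodule.smul_mem _ _ (Submodule.subset_span m2)))
      (Submodule.smul_mem _ _ (Submodule.subset_span m3)))
      (Submodule.smul_mem _ _ (Submodule.subset_span m4))


lemma key [Fintype F] (W : Submodule F (Fin 6 → F)) (T : (Fin 6 → F) → Prop)
    (hT : ∀ (c : F), c ≠ 0 → ∀ a, T a → T (c • a)) :
    (Fintype.card F - 1) * numConics W T = {a : Fin 6 → F | a ≠ 0 ∧ a ∈ W ∧ T a}.ncard := by
  classical
  set f : (Fin 6 → F) → Submodule F (Fin 6 → F) := fun a => Submodule.span F {a} with hf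
  set A : Finset (Fin 6 → F) := Finset.univ.filter (fun a => a ≠ 0 ∧ a ∈ W ∧ T a) with hA
  have hAset : {a : Fin 6 → F | a ≠ 0 ∧ a ∈ W ∧ T a} = ↑A := by
    ext a; simp [hA]
  have himg : {P : Submodule F (Fin 6 → F) |
      ∃ a : Fin 6 → F, a ≠ 0 ∧ a ∈ W ∧ T a ∧ P = Submodule.span F {a}} = ↑(A.image f) := by
    ext P
    simp only [Set.mem_setOf_eq, Finset.coe_image, Set.mem_image, Finset.mem_coe, hA,
      Finset.mem_filter, Finset.mem_univ, true_and]
    constructor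
    · rintro ⟨a, h1, h2, h3, h4⟩
      exact ⟨a, ⟨h1, h2, h3⟩, h4.symm⟩
    · rintro ⟨a, ⟨h1, h2, h3⟩, h4⟩
      exact ⟨a, h1, h2, h3, h4.symm⟩
  rw [numConics, himg, hAset, Set.ncard_coe_finset, Set.ncard_coe_finset]
  have hfiber : ∀ P ∈ A.image f, (A.filter (fun a => f a = P)).card = Fintype.card F - 1 := by
    intro P hP
    obtain ⟨a0, ha0, rfl⟩ := Finset.mem_image.mp hP
    have ha0' : a0 ≠ 0 ∧ a0 ∈ W ∧ T a0 := by simpa [hA] using ha0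
    have hfe : A.filter (fun a => f a = f a0)
        = (Finset.univ.erase (0 : F)).image (fun c => c • a0) := by
      ext a
      simp only [hA, Finset.mem_filter, Finset.mem_univ, true_and, Finset.mem_image,
        Finset.mem_erase]
      constructor
      · rintro ⟨⟨hne, hWm, hTa⟩, hspan⟩
        have hmem : a ∈ Submodule.span F {a0} := by
          have h' : a ∈ f a := Submodule.mem_span_singleton_self a
          rwa [hspan] at h'
        obtain ⟨c, hc⟩ := Submodule.mem_span_singleton.mp hmem
        have hc0 : c ≠ 0 := by
          intro h
          rw [h, zero_smul] at hc
          exact hne hc.symm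
        exact ⟨c, ⟨hc0, trivial⟩, hc⟩
      · rintro ⟨c, ⟨hc0, -⟩, rfl⟩
        refine ⟨⟨smul_ne_zero hc0 ha0'.1, W.smul_mem c ha0'.2.1, hT c hc0 _ ha0'.2.2⟩, ?_⟩
        exact Submodule.span_singleton_smul_eq (isUnit_iff_ne_zero.mpr hc0) a0
    have hinj : Function.Injective (fun c : F => c • a0) := by
      intro c d h
      simp only at h
      by_contra hne
      have : (c - d) • a0 = 0 := by
        rw [sub_smul, h, sub_self]
      rcases smul_eq_zero.mp this with h' | h'
      · exact hne (sub_eq_zero.mp h')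
      · exact ha0'.1 h'
    rw [hfe, Finset.card_image_of_injective _ hinj,
      Finset.card_erase_of_mem (Finset.mem_univ _), Finset.card_univ]
  calc (Fintype.card F - 1) * (A.image f).card
      = ∑ _P ∈ A.image f, (Fintype.card F - 1) := by
        rw [Finset.sum_const, smul_eq_mul, mul_comm]
    _ = ∑ P ∈ A.image f, (A.filter (fun a => f a = P)).card :=
        Finset.sum_congr rfl (fun P hP => (hfiber P hP).symm)
    _ = A.card := (Finset.card_eq_sum_card_image f A).symm

def iota (p : F × F × F × F) : Fin 6 → F := ![0, 0, p.1, p.2.1, p.2.2.1, p.2.2.2]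

lemma iota_inj : Function.Injective (iota (F := F)) := by
  rintro ⟨x, y, z, w⟩ ⟨x', y', z', w'⟩ h
  have h2 := congrFun h 2
  have h3 := congrFun h 3
  have h4 := congrFun h 4
  have h5 := congrFun h 5
  simp only [iota, vec6_2, vec6_3, vec6_4, vec6_5] at h2 h3 h4 h5
  simp_all

lemma ncard_shift (Q : F → F → F → F → Prop) :
    {a : Fin 6 → F | (a 0 = 0 ∧ a 1 = 0) ∧ Q (a 2) (a 3) (a 4) (a 5)}.ncard
      = {p : F × F × F × F | Q p.1 p.2.1 p.2.2.1 p.2.2.2}.ncard := by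
  rw [← Set.ncard_image_of_injective _ (iota_inj (F := F))]
  congr 1
  ext a
  simp only [Set.mem_image, Set.mem_setOf_eq]
  constructor
  · rintro ⟨⟨h0, h1⟩, hQ⟩
    refine ⟨(a 2, a 3, a 4, a 5), hQ, ?_⟩
    funext i; fin_cases i <;> simp [iota, h0, h1]
  · rintro ⟨p, hQ, rfl⟩
    exact ⟨⟨rfl, rfl⟩, hQ⟩

lemma count_ns [Fintype F] :
    {p : F × F × F × F | p.1 ≠ 0 ∧ p.2.1 ≠ 0}.ncard
      = (Fintype.card F - 1) * ((Fintype.card F - 1) * (Fintype.card F * Fintype.card F)) := by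
  classical
  have hset : {p : F × F × F × F | p.1 ≠ 0 ∧ p.2.1 ≠ 0}
      = ↑((Finset.univ.erase (0:F)) ×ˢ ((Finset.univ.erase (0:F)) ×ˢ
          ((Finset.univ : Finset F) ×ˢ (Finset.univ : Finset F)))) := by
    ext ⟨x, y, z, w⟩
    simp [Finset.mem_product]
  rw [hset, Set.ncard_coe_finset]
  simp [Finset.card_product, Finset.card_erase_of_mem, Finset.card_univ, Fintype.card_prod]

lemma count_dl [Fintype F] :
    {p : F × F × F × F | p.1 = 0 ∧ p.2.2.1 ^ 2 = 4 * p.2.1 * p.2.2.2 ∧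
        ¬ (p.2.1 = 0 ∧ p.2.2.1 = 0 ∧ p.2.2.2 = 0)}.ncard
      = Fintype.card F * Fintype.card F - 1 := by
  classical
  set C : Finset (F × F × F) := Finset.univ.filter (fun t => t.2.1 ^ 2 = 4 * t.1 * t.2.2) with hC
  have hCcard : C.card = Fintype.card F * Fintype.card F := by
    by_cases h2 : (2:F) = 0
    · have h4 : (4:F) = 0 := by linear_combination (2:F) * h2
      have : C = (Finset.univ : Finset F) ×ˢ (({(0:F)} : Finset F) ×ˢ (Finset.univ : Finset F)) := by
        ext ⟨y, z, w⟩
        simp only [hC, Finset.mem_filter, Finset.mem_univ, true_and, Finset.mem_product,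
          Finset.mem_singleton, h4, zero_mul, and_true, true_and]
        constructor
        · intro h
          exact (pow_eq_zero_iff (by norm_num : (2:ℕ) ≠ 0)).mp h
        · intro h
          rw [h]; ring
      rw [this]
      simp [Finset.card_product, Finset.card_univ]
    · have h4 : (4:F) ≠ 0 := by
        intro h
        apply h2
        have h22 : (2:F) * 2 = 0 := by linear_combination h
        exact mul_self_eq_zero.mp h22
      have : C.card = ((Finset.univ : Finset F) ×ˢ (Finset.univ : Finset F)).card := by
        apply Finset.card_nbij' (i := fun t => if t.1 = 0 then ((0:F), t.2.2) else (t.1, t.2.1))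
          (j := fun p => if p.1 = 0 then ((0:F), (0:F), p.2) else (p.1, p.2, p.2 ^ 2 / (4 * p.1)))
        · intro t _
          simp [Finset.mem_product]
        · intro p _
          by_cases hp : p.1 = 0
          · simp [hC, hp]
          · simp only [hC, Finset.mem_coe, Finset.mem_filter, Finset.mem_univ, true_and, if_neg hp]
            field_simp
        · rintro ⟨y, z, w⟩ ht
          simp only [hC, Finset.mem_coe, Finset.mem_filter, Finset.mem_univ, true_and] at ht
          by_cases hy : y = 0
          · have hz : z = 0 := by
              have : z ^ 2 = 0 := by rw [ht, hy]; ring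
              exact pow_eq_zero_iff (n := 2) (by norm_num) |>.mp this
            simp [hy, hz]
          · have hw : z ^ 2 / (4 * y) = w := by
              rw [ht]; field_simp
            simp [hy, hw]
        · rintro ⟨u, v⟩ _
          by_cases hu : u = 0
          · simp [hu]
          · simp [hu]
      rw [this, Finset.card_product, Finset.card_univ]
  have hmem0 : ((0:F), (0:F), (0:F)) ∈ C := by simp [hC]
  have hset : {p : F × F × F × F | p.1 = 0 ∧ p.2.2.1 ^ 2 = 4 * p.2.1 * p.2.2.2 ∧
        ¬ (p.2.1 = 0 ∧ p.2.2.1 = 0 ∧ p.2.2.2 = 0)}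
      = ↑(({(0:F)} : Finset F) ×ˢ (C.erase ((0:F), (0:F), (0:F)))) := by
    ext ⟨x, y, z, w⟩
    constructor
    · rintro ⟨hx, heq, hne⟩
      refine Finset.mem_coe.mpr (Finset.mem_product.mpr ⟨Finset.mem_singleton.mpr hx,
        Finset.mem_erase.mpr ⟨?_, by simp [hC, heq]⟩⟩)
      intro h
      apply hne
      simpa [Prod.ext_iff] using h
    · intro h
      obtain ⟨hx, h2⟩ := Finset.mem_product.mp (Finset.mem_coe.mp h)
      obtain ⟨hne, hmem⟩ := Finset.mem_erase.mp h2
      refine ⟨Finset.mem_singleton.mp hx, by simpa [hC] using hmem, ?_⟩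
      rintro ⟨hy, hz, hw⟩
      exact hne (Prod.ext hy (Prod.ext hz hw))
  rw [hset, Set.ncard_coe_finset, Finset.card_product, Finset.card_singleton, one_mul,
    Finset.card_erase_of_mem hmem0, hCcard]


lemma counts_RI [Fintype F] :
    ∃ s : ℕ,
      2 * s + Fintype.card F = Fintype.card F * Fintype.card F ∧
      {p : F × F × F × F | (p.1 ≠ 0 ∧ p.2.1 = 0) ∨ (p.1 = 0 ∧ p.2.1 = 0 ∧ p.2.2.1 ≠ 0) ∨
          (p.1 = 0 ∧ p.2.1 ≠ 0 ∧ ∃ r t : F, r ≠ t ∧ p.2.2.1 = p.2.1 * (r + t) ∧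
            p.2.2.2 = p.2.1 * (r * t))}.ncard
        = (Fintype.card F - 1) * (Fintype.card F * Fintype.card F + Fintype.card F + s) ∧
      {p : F × F × F × F | p.1 = 0 ∧ p.2.1 ≠ 0 ∧ ¬ ∃ r t : F, p.2.2.1 = p.2.1 * (r + t) ∧
          p.2.2.2 = p.2.1 * (r * t)}.ncard
        = (Fintype.card F - 1) * (Fintype.card F * Fintype.card F - (s + Fintype.card F)) := by
  classical
  set phi : F × F → F × F := fun p => (p.1 + p.2, p.1 * p.2) with hphi
  set D : Finset (F × F) := Finset.univ.filter (fun p => p.1 = p.2) with hD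
  set Dc : Finset (F × F) := Finset.univ.filter (fun p => ¬ p.1 = p.2) with hDc
  set S : Finset (F × F) := Dc.image phi with hS
  set E : Finset (F × F) := Finset.univ.image (fun r : F => (r + r, r * r)) with hE
  -- cardinality of the diagonal
  have hdiagcard : D.card = Fintype.card F := by
    have h1 : D = Finset.univ.image (fun r : F => (r, r)) := by
      ext ⟨r, t⟩
      simp only [hD, Finset.mem_filter, Finset.mem_univ, true_and, Finset.mem_image,
        Prod.mk.injEq]
      constructor
      · intro h
        exact ⟨r, rfl, h⟩
      · rintro ⟨u, h1, h2⟩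
        rw [← h1, ← h2]
    have h2 : Function.Injective (fun r : F => (r, r)) := by
      intro a b h
      exact (Prod.ext_iff.mp h).1
    rw [h1, Finset.card_image_of_injective _ h2, Finset.card_univ]
  have hDcCard : Dc.card + Fintype.card F = Fintype.card F * Fintype.card F := by
    have hunion : D ∪ Dc = Finset.univ := by
      ext p
      simp only [Finset.mem_union, hD, hDc, Finset.mem_filter, Finset.mem_univ, true_and,
        Finset.mem_univ, iff_true]
      exact em _
    have hdisj : Disjoint D Dc := by
      rw [Finset.disjoint_left]
      intro p h1 h2
      simp only [hD, hDc, Finset.mem_filter, Finset.mem_univ, true_and] at h1 h2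
      exact h2 h1
    have hcu := Finset.card_union_of_disjoint hdisj
    rw [hunion, Finset.card_univ, Fintype.card_prod] at hcu
    omega
  -- fibers of phi over Dc have exactly two elements
  have hfib : ∀ b ∈ S, (Dc.filter (fun p => phi p = b)).card = 2 := by
    intro b hb
    rw [hS] at hb
    obtain ⟨⟨r, t⟩, hrtD, rfl⟩ := Finset.mem_image.mp hb
    have hrt : r ≠ t := by simpa [hDc] using hrtD
    have hpair : Dc.filter (fun p => phi p = phi (r, t)) = {(r, t), (t, r)} := by
      ext ⟨r', t'⟩
      simp only [hDc, Finset.mem_filter, Finset.mem_univ, true_and, hphi, Prod.mk.injEq,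
        Finset.mem_insert, Finset.mem_singleton]
      constructor
      · rintro ⟨hne', h1, h2⟩
        have hz : (r' - r) * (r' - t) = 0 := by linear_combination r' * h1 - h2
        rcases mul_eq_zero.mp hz with h' | h'
        · left
          have hr : r' = r := sub_eq_zero.mp h'
          exact ⟨hr, by linear_combination h1 - hr⟩
        · right
          have hr : r' = t := sub_eq_zero.mp h'
          exact ⟨hr, by linear_combination h1 - hr⟩
      · rintro (⟨h1, h2⟩ | ⟨h1, h2⟩)
        · subst h1; subst h2; exact ⟨hrt, rfl, rfl⟩
        · subst h1; subst h2; exact ⟨Ne.symm hrt, by ring, by ring⟩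
    rw [hpair]
    exact Finset.card_pair (fun h => hrt (Prod.ext_iff.mp h).1)
  have hDS : Dc.card = 2 * S.card := by
    rw [Finset.card_eq_sum_card_image phi Dc, ← hS]
    rw [Finset.sum_congr rfl hfib, Finset.sum_const, smul_eq_mul]
    ring
  -- the image of phi on everything
  have hdiaginj : Function.Injective (fun r : F => (r + r, r * r)) := by
    intro r r' h
    obtain ⟨h1, h2⟩ := Prod.ext_iff.mp h
    simp only at h1 h2
    have hz : (r - r') * (r + r') = 0 := by linear_combination h2
    rcases mul_eq_zero.mp hz with h' | h'
    · exact sub_eq_zero.mp h'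
    · by_cases hc : (2:F) = 0
      · linear_combination h' - r' * hc
      · have h4 : r' * 4 = 0 := by linear_combination 2 * h' - h1
        have hr' : r' = 0 := by
          rcases mul_eq_zero.mp h4 with h'' | h''
          · exact h''
          · exfalso
            apply hc
            have h22 : (2:F) * 2 = 0 := by linear_combination h''
            exact mul_self_eq_zero.mp h22
        rw [hr'] at h' ⊢
        simpa using h'
  have hEcard : E.card = Fintype.card F := by
    rw [hE, Finset.card_image_of_injective _ hdiaginj, Finset.card_univ]
  have hsplit : Finset.univ.image phi = S ∪ E := by
    ext b
    constructor
    · intro hb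
      obtain ⟨⟨r, t⟩, -, rfl⟩ := Finset.mem_image.mp hb
      by_cases h : r = t
      · subst h
        exact Finset.mem_union_right _ (by rw [hE]; exact Finset.mem_image.mpr ⟨r, Finset.mem_univ r, by simp [hphi]⟩)
      · exact Finset.mem_union_left _ (by rw [hS]; exact Finset.mem_image.mpr ⟨(r, t), by simp [hDc, h], rfl⟩)
    · intro hb
      rcases Finset.mem_union.mp hb with hb | hb
      · rw [hS] at hb
        obtain ⟨p, -, rfl⟩ := Finset.mem_image.mp hb
        exact Finset.mem_image_of_mem phi (Finset.mem_univ p)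
      · rw [hE] at hb
        obtain ⟨r, -, rfl⟩ := Finset.mem_image.mp hb
        exact Finset.mem_image.mpr ⟨(r, r), Finset.mem_univ _, by simp [hphi]⟩
  have hdisjSE : Disjoint S E := by
    rw [Finset.disjoint_left]
    intro b hbS hbE
    rw [hS] at hbS
    rw [hE] at hbE
    obtain ⟨⟨r', t'⟩, hmem, rfl⟩ := Finset.mem_image.mp hbS
    obtain ⟨r, -, hpe⟩ := Finset.mem_image.mp hbE
    have hne : r' ≠ t' := by simpa [hDc] using hmem
    obtain ⟨h1, h2⟩ := Prod.ext_iff.mp hpe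
    simp only [hphi] at h1 h2
    have hsq : (r' - r) ^ 2 = 0 := by linear_combination h2 - r' * h1
    have hr : r' = r := sub_eq_zero.mp (pow_eq_zero_iff (by norm_num : (2:ℕ) ≠ 0) |>.mp hsq)
    apply hne
    have ht : t' = r := by linear_combination - h1 - hr
    rw [hr, ht]
  have himgcard : (Finset.univ.image phi).card = S.card + Fintype.card F := by
    rw [hsplit, Finset.card_union_of_disjoint hdisjSE, hEcard]
  -- the common injection g
  set g : F × F × F → F × F × F × F := fun x => ((0:F), x.1, x.1 * x.2.1, x.1 * x.2.2) with hg
  have hg_inj : ∀ (t : Finset (F × F)), Set.InjOn g ↑((Finset.univ.erase (0:F)) ×ˢ t) := by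
    intro t
    rintro ⟨y, u, v⟩ hx ⟨y', u', v'⟩ hx' h
    simp only [Finset.coe_product, Set.mem_prod, Finset.mem_coe, Finset.mem_erase,
      Finset.mem_univ, and_true, true_and] at hx hx'
    have hy : y ≠ 0 := hx.1
    simp only [hg, Prod.mk.injEq] at h
    obtain ⟨-, h1, h2, h3⟩ := h
    subst h1
    have hu : u = u' := mul_left_cancel₀ hy h2
    have hv : v = v' := mul_left_cancel₀ hy h3
    rw [hu, hv]
  refine ⟨S.card, by omega, ?_, ?_⟩
  · -- real pairs count
    set P1 : Finset (F × F × F × F) := (Finset.univ.erase (0:F)) ×ˢ (({(0:F)} : Finset F) ×ˢ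
      ((Finset.univ : Finset F) ×ˢ (Finset.univ : Finset F))) with hP1
    set P2 : Finset (F × F × F × F) := ({(0:F)} : Finset F) ×ˢ (({(0:F)} : Finset F) ×ˢ
      ((Finset.univ.erase (0:F)) ×ˢ (Finset.univ : Finset F))) with hP2
    set P3 : Finset (F × F × F × F) := ((Finset.univ.erase (0:F)) ×ˢ S).image g with hP3
    have hmem1 : ∀ x y z w : F, ((x, y, z, w) ∈ P1) ↔ (x ≠ 0 ∧ y = 0) := by
      intro x y z w
      simp [hP1, Finset.mem_product, eq_comm]
    have hmem2 : ∀ x y z w : F, ((x, y, z, w) ∈ P2) ↔ (x = 0 ∧ y = 0 ∧ z ≠ 0) := by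
      intro x y z w
      simp [hP2, Finset.mem_product, eq_comm]
      try tauto
    have hmem3 : ∀ x y z w : F, ((x, y, z, w) ∈ P3) ↔
        (x = 0 ∧ y ≠ 0 ∧ ∃ r t : F, r ≠ t ∧ z = y * (r + t) ∧ w = y * (r * t)) := by
      intro x y z w
      rw [hP3]
      constructor
      · intro h
        obtain ⟨⟨y', u, v⟩, hmem, heq⟩ := Finset.mem_image.mp h
        obtain ⟨hy', hSuv⟩ := Finset.mem_product.mp hmem
        have hy'0 : y' ≠ 0 := (Finset.mem_erase.mp hy').1
        rw [hS] at hSuv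
        obtain ⟨⟨r, t⟩, hrt, hphiuv⟩ := Finset.mem_image.mp hSuv
        have hrtne : r ≠ t := by simpa [hDc] using hrt
        obtain ⟨hu, hv⟩ := Prod.ext_iff.mp hphiuv
        simp only [hphi] at hu hv
        simp only [hg, Prod.mk.injEq] at heq
        obtain ⟨hx0, hyy, hz, hw⟩ := heq
        refine ⟨hx0.symm, by rw [← hyy]; exact hy'0, r, t, hrtne, ?_, ?_⟩
        · rw [← hz, ← hyy, ← hu]
        · rw [← hw, ← hyy, ← hv]
      · rintro ⟨hx, hy, r, t, hrt, hz, hw⟩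
        apply Finset.mem_image.mpr
        refine ⟨(y, (r + t, r * t)), ?_, ?_⟩
        · apply Finset.mem_product.mpr
          refine ⟨Finset.mem_erase.mpr ⟨hy, Finset.mem_univ y⟩, ?_⟩
          rw [hS]
          exact Finset.mem_image.mpr ⟨(r, t), by simp [hDc, hrt], by simp [hphi]⟩
        · simp [hg, hx, hz, hw]
    have hseteq : {p : F × F × F × F | (p.1 ≠ 0 ∧ p.2.1 = 0) ∨ (p.1 = 0 ∧ p.2.1 = 0 ∧ p.2.2.1 ≠ 0) ∨
          (p.1 = 0 ∧ p.2.1 ≠ 0 ∧ ∃ r t : F, r ≠ t ∧ p.2.2.1 = p.2.1 * (r + t) ∧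
            p.2.2.2 = p.2.1 * (r * t))} = ↑(P1 ∪ P2 ∪ P3) := by
      ext ⟨x, y, z, w⟩
      simp only [Set.mem_setOf_eq, Finset.coe_union, Set.mem_union, Finset.mem_coe]
      rw [hmem1, hmem2, hmem3]
      exact or_assoc.symm
    have hd12 : Disjoint P1 P2 := by
      rw [Finset.disjoint_left]
      rintro ⟨x, y, z, w⟩ h1 h2
      exact ((hmem1 x y z w).mp h1).1 ((hmem2 x y z w).mp h2).1
    have hd123 : Disjoint (P1 ∪ P2) P3 := by
      rw [Finset.disjoint_left]
      rintro ⟨x, y, z, w⟩ h1 h2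
      obtain ⟨-, hy, -⟩ := (hmem3 x y z w).mp h2
      rcases Finset.mem_union.mp h1 with h | h
      · exact hy ((hmem1 x y z w).mp h).2
      · exact hy ((hmem2 x y z w).mp h).2.1
    rw [hseteq, Set.ncard_coe_finset, Finset.card_union_of_disjoint hd123,
      Finset.card_union_of_disjoint hd12]
    rw [hP3, Finset.card_image_of_injOn (hg_inj S)]
    rw [hP1, hP2]
    simp only [Finset.card_product, Finset.card_singleton, Finset.card_univ,
      Finset.card_erase_of_mem (Finset.mem_univ (0:F))]
    ring
  · -- imaginary pairs count
    set Pim : Finset (F × F × F × F) := ((Finset.univ.erase (0:F)) ×ˢ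
      ((Finset.univ : Finset (F × F)) \ (Finset.univ.image phi))).image g with hPim
    have hmemI : ∀ x y z w : F, ((x, y, z, w) ∈ Pim) ↔
        (x = 0 ∧ y ≠ 0 ∧ ¬ ∃ r t : F, z = y * (r + t) ∧ w = y * (r * t)) := by
      intro x y z w
      rw [hPim]
      constructor
      · intro h
        obtain ⟨⟨y', u, v⟩, hmem, heq⟩ := Finset.mem_image.mp h
        obtain ⟨hy', huv⟩ := Finset.mem_product.mp hmem
        have hy'0 : y' ≠ 0 := (Finset.mem_erase.mp hy').1
        have hnotin : (u, v) ∉ Finset.univ.image phi := (Finset.mem_sdiff.mp huv).2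
        simp only [hg, Prod.mk.injEq] at heq
        obtain ⟨hx0, hyy, hz, hw⟩ := heq
        subst hyy
        refine ⟨hx0.symm, hy'0, ?_⟩
        rintro ⟨r, t, hzr, hwr⟩
        apply hnotin
        apply Finset.mem_image.mpr
        refine ⟨(r, t), Finset.mem_univ _, ?_⟩
        have hu : u = r + t := by
          apply mul_left_cancel₀ hy'0
          rw [hz, hzr]
        have hv : v = r * t := by
          apply mul_left_cancel₀ hy'0
          rw [hw, hwr]
        simp [hphi, hu, hv]
      · rintro ⟨hx, hy, hno⟩
        apply Finset.mem_image.mpr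
        refine ⟨(y, (z / y, w / y)), ?_, ?_⟩
        · apply Finset.mem_product.mpr
          refine ⟨Finset.mem_erase.mpr ⟨hy, Finset.mem_univ y⟩, ?_⟩
          apply Finset.mem_sdiff.mpr
          refine ⟨Finset.mem_univ _, ?_⟩
          intro hmem
          obtain ⟨⟨r, t⟩, -, hpe⟩ := Finset.mem_image.mp hmem
          obtain ⟨h1, h2⟩ := Prod.ext_iff.mp hpe
          simp only [hphi] at h1 h2
          apply hno
          refine ⟨r, t, ?_, ?_⟩
          · rw [h1]; field_simp
          · rw [h2]; field_simp
        · have hz' : y * (z / y) = z := by field_simp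
          have hw' : y * (w / y) = w := by field_simp
          simp [hg, hx, hz', hw']
    have hseteq : {p : F × F × F × F | p.1 = 0 ∧ p.2.1 ≠ 0 ∧
          ¬ ∃ r t : F, p.2.2.1 = p.2.1 * (r + t) ∧ p.2.2.2 = p.2.1 * (r * t)} = ↑Pim := by
      ext ⟨x, y, z, w⟩
      rw [Set.mem_setOf_eq, Finset.mem_coe, hmemI]
    rw [hseteq, Set.ncard_coe_finset, hPim, Finset.card_image_of_injOn (hg_inj _),
      Finset.card_product, Finset.card_sdiff_of_subset (Finset.subset_univ _), himgcard,
      Finset.card_erase_of_mem (Finset.mem_univ (0:F))]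
    simp only [Finset.card_univ, Fintype.card_prod]


/-- conic counts of the web `(X0X2, X1^2, X1X2, X2^2)` (line-orbit `o_6`). -/
theorem web_o6_conic_counts (F : Type) [Field F] [Fintype F] (q : ℕ)
    (hq : Fintype.card F = q) (W : Submodule F (Fin 6 → F))
    (hW : W = Submodule.span F ({![0, 0, 1, 0, 0, 0], ![0, 0, 0, 1, 0, 0],
      ![0, 0, 0, 0, 1, 0], ![0, 0, 0, 0, 0, 1]} : Set (Fin 6 → F))) :
    numConics W IsDoubleLine = q + 1 ∧
    numConics W IsRealPair = (3 * q ^ 2 + q) / 2 ∧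
    numConics W IsImagPair = (q ^ 2 - q) / 2 ∧
    numConics W IsNonsingular = q ^ 3 - q ^ 2 := by
  subst hq
  subst hW
  classical
  obtain ⟨s, hs, hrealcount, himagcount⟩ := counts_RI (F := F)
  have hq2 : 2 ≤ Fintype.card F := Fintype.one_lt_card
  have hk0 : 0 < Fintype.card F - 1 := by omega
  have e3 : Fintype.card F ^ 3 = Fintype.card F * (Fintype.card F * Fintype.card F) := by ring
  have e2 : Fintype.card F ^ 2 = Fintype.card F * Fintype.card F := by ring
  -- double lines
  have hsetDL : {a : Fin 6 → F | a ≠ 0 ∧ a ∈ Submodule.span F ({![0, 0, 1, 0, 0, 0],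
        ![0, 0, 0, 1, 0, 0], ![0, 0, 0, 0, 1, 0], ![0, 0, 0, 0, 0, 1]} : Set (Fin 6 → F)) ∧
        IsDoubleLine a}
      = {a : Fin 6 → F | (a 0 = 0 ∧ a 1 = 0) ∧ (a 2 = 0 ∧ a 4 ^ 2 = 4 * a 3 * a 5 ∧
          ¬ (a 3 = 0 ∧ a 4 = 0 ∧ a 5 = 0))} := by
    ext a
    simp only [Set.mem_setOf_eq]
    constructor
    · rintro ⟨hne, hmem, hdl⟩
      obtain ⟨h0, h1⟩ := (memW a).mp hmem
      exact ⟨⟨h0, h1⟩, (dl_iff h0 h1).mp hdl⟩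
    · rintro ⟨⟨h0, h1⟩, h2, h45, hne3⟩
      have hne : a ≠ 0 := by
        intro h
        exact hne3 ⟨by rw [h]; rfl, by rw [h]; rfl, by rw [h]; rfl⟩
      exact ⟨hne, (memW a).mpr ⟨h0, h1⟩, (dl_iff h0 h1).mpr ⟨h2, h45, hne3⟩⟩
  have hcDL : (Fintype.card F - 1) * numConics (Submodule.span F ({![0, 0, 1, 0, 0, 0],
        ![0, 0, 0, 1, 0, 0], ![0, 0, 0, 0, 1, 0], ![0, 0, 0, 0, 0, 1]} : Set (Fin 6 → F)))
        IsDoubleLine = Fintype.card F * Fintype.card F - 1 := by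
    rw [key _ _ (fun c hc a h => dl_smul hc h), hsetDL]
    exact (ncard_shift (fun x y z w : F => x = 0 ∧ z ^ 2 = 4 * y * w ∧
      ¬ (y = 0 ∧ z = 0 ∧ w = 0))).trans count_dl
  -- nonsingular
  have hsetNS : {a : Fin 6 → F | a ≠ 0 ∧ a ∈ Submodule.span F ({![0, 0, 1, 0, 0, 0],
        ![0, 0, 0, 1, 0, 0], ![0, 0, 0, 0, 1, 0], ![0, 0, 0, 0, 0, 1]} : Set (Fin 6 → F)) ∧
        IsNonsingular a}
      = {a : Fin 6 → F | (a 0 = 0 ∧ a 1 = 0) ∧ (a 2 ≠ 0 ∧ a 3 ≠ 0)} := by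
    ext a
    simp only [Set.mem_setOf_eq]
    constructor
    · rintro ⟨hne, hmem, hns⟩
      obtain ⟨h0, h1⟩ := (memW a).mp hmem
      exact ⟨⟨h0, h1⟩, (ns_iff h0 h1).mp hns⟩
    · rintro ⟨⟨h0, h1⟩, h2, h3⟩
      have hne : a ≠ 0 := fun h => h2 (by rw [h]; rfl)
      exact ⟨hne, (memW a).mpr ⟨h0, h1⟩, (ns_iff h0 h1).mpr ⟨h2, h3⟩⟩
  have hcNS : (Fintype.card F - 1) * numConics (Submodule.span F ({![0, 0, 1, 0, 0, 0],
        ![0, 0, 0, 1, 0, 0], ![0, 0, 0, 0, 1, 0], ![0, 0, 0, 0, 0, 1]} : Set (Fin 6 → F)))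
        IsNonsingular
      = (Fintype.card F - 1) * ((Fintype.card F - 1) * (Fintype.card F * Fintype.card F)) := by
    rw [key _ _ (fun c hc a h => ns_smul hc h), hsetNS]
    exact (ncard_shift (fun x y z w : F => x ≠ 0 ∧ y ≠ 0)).trans count_ns
  -- real pairs
  have hsetR : {a : Fin 6 → F | a ≠ 0 ∧ a ∈ Submodule.span F ({![0, 0, 1, 0, 0, 0],
        ![0, 0, 0, 1, 0, 0], ![0, 0, 0, 0, 1, 0], ![0, 0, 0, 0, 0, 1]} : Set (Fin 6 → F)) ∧
        IsRealPair a}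
      = {a : Fin 6 → F | (a 0 = 0 ∧ a 1 = 0) ∧ ((a 2 ≠ 0 ∧ a 3 = 0) ∨
          (a 2 = 0 ∧ a 3 = 0 ∧ a 4 ≠ 0) ∨ (a 2 = 0 ∧ a 3 ≠ 0 ∧
            ∃ r t : F, r ≠ t ∧ a 4 = a 3 * (r + t) ∧ a 5 = a 3 * (r * t)))} := by
    ext a
    simp only [Set.mem_setOf_eq]
    constructor
    · rintro ⟨hne, hmem, hrp⟩
      obtain ⟨h0, h1⟩ := (memW a).mp hmem
      exact ⟨⟨h0, h1⟩, (real_iff h0 h1).mp hrp⟩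
    · rintro ⟨⟨h0, h1⟩, hcond⟩
      have hne : a ≠ 0 := by
        intro h
        rcases hcond with ⟨h2, -⟩ | ⟨-, -, h4⟩ | ⟨-, h3, -⟩
        · exact h2 (by rw [h]; rfl)
        · exact h4 (by rw [h]; rfl)
        · exact h3 (by rw [h]; rfl)
      exact ⟨hne, (memW a).mpr ⟨h0, h1⟩, (real_iff h0 h1).mpr hcond⟩
  have hcR : (Fintype.card F - 1) * numConics (Submodule.span F ({![0, 0, 1, 0, 0, 0],
        ![0, 0, 0, 1, 0, 0], ![0, 0, 0, 0, 1, 0], ![0, 0, 0, 0, 0, 1]} : Set (Fin 6 → F)))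
        IsRealPair
      = (Fintype.card F - 1) * (Fintype.card F * Fintype.card F + Fintype.card F + s) := by
    rw [key _ _ (fun c hc a h => rp_smul hc h), hsetR]
    exact (ncard_shift (fun x y z w : F => (x ≠ 0 ∧ y = 0) ∨ (x = 0 ∧ y = 0 ∧ z ≠ 0) ∨
      (x = 0 ∧ y ≠ 0 ∧ ∃ r t : F, r ≠ t ∧ z = y * (r + t) ∧
        w = y * (r * t)))).trans hrealcount
  -- imaginary pairs
  have hsetI : {a : Fin 6 → F | a ≠ 0 ∧ a ∈ Submodule.span F ({![0, 0, 1, 0, 0, 0],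
        ![0, 0, 0, 1, 0, 0], ![0, 0, 0, 0, 1, 0], ![0, 0, 0, 0, 0, 1]} : Set (Fin 6 → F)) ∧
        IsImagPair a}
      = {a : Fin 6 → F | (a 0 = 0 ∧ a 1 = 0) ∧ (a 2 = 0 ∧ a 3 ≠ 0 ∧
          ¬ ∃ r t : F, a 4 = a 3 * (r + t) ∧ a 5 = a 3 * (r * t))} := by
    ext a
    simp only [Set.mem_setOf_eq]
    constructor
    · rintro ⟨hne, hmem, hip⟩
      obtain ⟨h0, h1⟩ := (memW a).mp hmem
      exact ⟨⟨h0, h1⟩, (im_iff h0 h1).mp hip⟩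
    · rintro ⟨⟨h0, h1⟩, h2, h3, hno⟩
      have hne : a ≠ 0 := fun h => h3 (by rw [h]; rfl)
      exact ⟨hne, (memW a).mpr ⟨h0, h1⟩, (im_iff h0 h1).mpr ⟨h2, h3, hno⟩⟩
  have hcI : (Fintype.card F - 1) * numConics (Submodule.span F ({![0, 0, 1, 0, 0, 0],
        ![0, 0, 0, 1, 0, 0], ![0, 0, 0, 0, 1, 0], ![0, 0, 0, 0, 0, 1]} : Set (Fin 6 → F)))
        IsImagPair
      = (Fintype.card F - 1) * (Fintype.card F * Fintype.card F - (s + Fintype.card F)) := by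
    rw [key _ _ (fun c hc a h => ip_smul hc h), hsetI]
    exact (ncard_shift (fun x y z w : F => x = 0 ∧ y ≠ 0 ∧
      ¬ ∃ r t : F, z = y * (r + t) ∧ w = y * (r * t))).trans himagcount
  refine ⟨?_, ?_, ?_, ?_⟩
  · -- double lines : q + 1
    obtain ⟨m, hm⟩ := Nat.exists_eq_add_of_le hq2
    have hfact : Fintype.card F * Fintype.card F - 1
        = (Fintype.card F - 1) * (Fintype.card F + 1) := by
      rw [hm]
      have h1 : 2 + m - 1 = m + 1 := by omega
      rw [h1]
      have h2 : (2 + m) * (2 + m) = (m + 1) * (2 + m + 1) + 1 := by ring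
      omega
    rw [hfact] at hcDL
    exact Nat.eq_of_mul_eq_mul_left hk0 hcDL
  · -- real pairs
    have hn := Nat.eq_of_mul_eq_mul_left hk0 hcR
    omega
  · -- imaginary pairs
    have hn := Nat.eq_of_mul_eq_mul_left hk0 hcI
    omega
  · -- nonsingular
    have hn := Nat.eq_of_mul_eq_mul_left hk0 hcNS
    have h1 : (Fintype.card F - 1) * (Fintype.card F * Fintype.card F)
        = Fintype.card F * (Fintype.card F * Fintype.card F)
          - 1 * (Fintype.card F * Fintype.card F) := Nat.sub_mul _ _ _
    omega

end Conics
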